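/- Fix integers n, j, m ≥ 1 with j ≤ n, a composition (n_1,…,n_j) of n into j positive parts, a real α < 1, and real weights V(n,k) with V(n,j) ≠ 0. Let 1 ≤ l ≤ n+m, and for a tuple (m_1,…,m_j) set O_l = #{i ∈ {1,…,j} : n_i + m_i = l}. Then the expected number of old blocks of size l satisfies: ∑ O_l·J(m_1,…,m_j; s) = ∑_{i : n_i ≤ l ≤ n_i+m} binom(m, l−n_i)·(n_i−α)_{l−n_i}·∑_{k=0}^{m−l+n_i} (V(n+m,j+k)/V(n,j))·S(m−l+n_i, k; α, −(n−jα+α−n_i)), where the left sum ranges over all tuples (m_1,…,m_j) of nonnegative integers and s ≥ 0 with ∑_{i=1}^{j} m_i + s = m. -/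

import Mathlib

/-- Rising factorial `(x)_n = x(x+1)⋯(x+n−1)`. -/
noncomputable def risingFac (x : ℝ) (n : ℕ) : ℝ := ∏ i ∈ Finset.range n, (x + i)

/-- Rising factorial with increment `α`: `(x)_{n↑α} = ∏_{i<n} (x + iα)`. -/
noncomputable def risingFacInc (x α : ℝ) (n : ℕ) : ℝ := ∏ i ∈ Finset.range n, (x + i * α)

/-- Falling factorial `(x)_{[n]} = x(x−1)⋯(x−n+1)`. -/
noncomputable def fallingFac (x : ℝ) (n : ℕ) : ℝ := ∏ i ∈ Finset.range n, (x - i)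

/-- Compositions of `n` into `k` positive parts, as functions `Fin k → ℕ`. -/
def compositions (n k : ℕ) : Finset (Fin k → ℕ) :=
  (Fintype.piFinset fun _ => Finset.range (n + 1)).filter
    (fun f => (∀ i, 0 < f i) ∧ ∑ i, f i = n)

/-- Tuples of `k` nonnegative integers summing to `n`. -/
def weakCompositions (n k : ℕ) : Finset (Fin k → ℕ) :=
  (Fintype.piFinset fun _ => Finset.range (n + 1)).filter (fun f => ∑ i, f i = n)

/-- Generalized (central) Stirling number
`S(n,k;α) = (n!/k!) ∑_{(n_1,…,n_k)} ∏_j (1−α)_{n_j−1}/n_j!`,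
the sum over compositions of `n` into `k` positive parts. -/
noncomputable def genStirling (α : ℝ) (n k : ℕ) : ℝ :=
  (Nat.factorial n : ℝ) / (Nat.factorial k : ℝ) *
    ∑ f ∈ compositions n k, ∏ j, risingFac (1 - α) (f j - 1) / (Nat.factorial (f j) : ℝ)

/-- Non-central generalized Stirling number
`S(n,k;α,γ) = ∑_{s=k}^n C(n,s) S(s,k;α) (−γ)_{n−s}`. -/
noncomputable def genStirlingNC (α γ : ℝ) (n k : ℕ) : ℝ :=
  ∑ s ∈ Finset.Icc k n, (n.choose s : ℝ) * genStirling α s k * risingFac (-γ) (n - s)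

/-- The joint conditional distribution of old-block allocations
`J(m_1,…,m_j;s) = m!/(m_1!⋯m_j!·s!)·∏_i (n_i−α)_{m_i}·
∑_{k=0}^{s} (V(n+m,j+k)/V(n,j))·S(s,k;α)`. -/
noncomputable def oldJoint (α : ℝ) (V : ℕ → ℕ → ℝ) (n j m : ℕ) (nv : Fin j → ℕ)
    (mv : Fin j → ℕ) (s : ℕ) : ℝ :=
  (Nat.factorial m : ℝ) /
      ((∏ i, (Nat.factorial (mv i) : ℝ)) * (Nat.factorial s : ℝ)) *
    (∏ i, risingFac ((nv i : ℝ) - α) (mv i)) *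
    ∑ k ∈ Finset.range (s + 1), (V (n + m) (j + k) / V n j) * genStirling α s k

lemma risingFac_succ (x : ℝ) (n : ℕ) : risingFac x (n+1) = risingFac x n * (x + n) := by
  simp [risingFac, Finset.prod_range_succ]

lemma risingFac_zero_left {r : ℕ} (hr : 0 < r) : risingFac 0 r = 0 := by
  have : (0:ℕ) ∈ Finset.range r := by simpa using hr
  exact Finset.prod_eq_zero this (by simp)

lemma vandermonde_rising (x y : ℝ) (r : ℕ) :
    ∑ s ∈ Finset.range (r+1), (r.choose s : ℝ) * risingFac x s * risingFac y (r - s)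
      = risingFac (x + y) r := by
  induction r with
  | zero => simp [risingFac]
  | succ r ih =>
    have hA : ∑ s ∈ Finset.range (r+2), ((r+1).choose s : ℝ) * risingFac x s * risingFac y (r+1-s)
        = (∑ s ∈ Finset.range (r+1), (r.choose s : ℝ) * risingFac x s * risingFac y (r+1-s))
          + ∑ s ∈ Finset.range (r+1), (r.choose s : ℝ) * risingFac x (s+1) * risingFac y (r-s) := by
      rw [Finset.sum_range_succ' (fun s => ((r+1).choose s : ℝ) * risingFac x s * risingFac y (r+1-s))]
      rw [Finset.sum_range_succ' (fun s => (r.choose s : ℝ) * risingFac x s * risingFac y (r+1-s))]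
      have h1 : ∀ s, ((r+1).choose (s+1) : ℝ) = (r.choose s : ℝ) + (r.choose (s+1) : ℝ) := by
        intro s; rw [Nat.choose_succ_succ]; push_cast; ring
      have h2 : ∀ s ∈ Finset.range (r+1),
          ((r+1).choose (s+1) : ℝ) * risingFac x (s+1) * risingFac y (r+1-(s+1))
          = (r.choose (s+1) : ℝ) * risingFac x (s+1) * risingFac y (r+1-(s+1))
            + (r.choose s : ℝ) * risingFac x (s+1) * risingFac y (r-s) := by
        intro s _
        have : r + 1 - (s+1) = r - s := by omega
        rw [this, h1]; ring
      rw [Finset.sum_congr rfl h2, Finset.sum_add_distrib]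
      have h3 : ∑ s ∈ Finset.range (r+1), (r.choose (s+1) : ℝ) * risingFac x (s+1) * risingFac y (r+1-(s+1))
          = ∑ s ∈ Finset.range r, (r.choose (s+1) : ℝ) * risingFac x (s+1) * risingFac y (r+1-(s+1)) := by
        rw [Finset.sum_range_succ]; simp
      rw [h3]; simp only [Nat.choose_zero_right, Nat.cast_one]; ring
    rw [hA]
    have e1 : ∑ s ∈ Finset.range (r+1), (r.choose s : ℝ) * risingFac x s * risingFac y (r+1-s)
        = ∑ s ∈ Finset.range (r+1), (r.choose s : ℝ) * risingFac x s * risingFac y (r-s) * (y + (r - s : ℕ)) := by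
      refine Finset.sum_congr rfl fun s hs => ?_
      have hs' : s ≤ r := by simpa [Nat.lt_succ_iff] using hs
      have : r + 1 - s = (r - s) + 1 := by omega
      rw [this, risingFac_succ]; ring
    have e2 : ∑ s ∈ Finset.range (r+1), (r.choose s : ℝ) * risingFac x (s+1) * risingFac y (r-s)
        = ∑ s ∈ Finset.range (r+1), (r.choose s : ℝ) * risingFac x s * risingFac y (r-s) * (x + s) := by
      refine Finset.sum_congr rfl fun s hs => ?_
      rw [risingFac_succ]; ring
    rw [e1, e2, ← Finset.sum_add_distrib]
    have e3 : ∑ s ∈ Finset.range (r+1),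
        ((r.choose s : ℝ) * risingFac x s * risingFac y (r-s) * (y + (r - s : ℕ))
          + (r.choose s : ℝ) * risingFac x s * risingFac y (r-s) * (x + s))
        = ∑ s ∈ Finset.range (r+1), ((r.choose s : ℝ) * risingFac x s * risingFac y (r-s)) * (x + y + r) := by
      refine Finset.sum_congr rfl fun s hs => ?_
      have hs' : s ≤ r := by simpa [Nat.lt_succ_iff] using hs
      have : ((r - s : ℕ) : ℝ) = (r : ℝ) - (s : ℝ) := by
        rw [Nat.cast_sub hs']
      rw [this]; ring
    rw [e3, ← Finset.sum_mul, ih, risingFac_succ]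

lemma vandermonde_multi {ι : Type*} [DecidableEq ι] (s : Finset ι) (x : ι → ℝ) (r : ℕ) :
    ∑ f ∈ s.piAntidiag r,
        (∏ i ∈ s, ((f i).factorial : ℝ))⁻¹ * ∏ i ∈ s, risingFac (x i) (f i)
      = risingFac (∑ i ∈ s, x i) r / r.factorial := by
  induction s using Finset.cons_induction generalizing r with
  | empty =>
    rcases Nat.eq_zero_or_pos r with hr | hr
    · subst hr; simp [risingFac]
    · rw [Finset.piAntidiag_empty_of_ne_zero (by omega)]
      simp [risingFac_zero_left hr]
  | cons i s hi ih =>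
    rw [Finset.piAntidiag_cons hi, Finset.sum_disjiUnion]
    have key : ∀ p ∈ Finset.HasAntidiagonal.antidiagonal r,
        ∑ f ∈ (Finset.piAntidiag s p.2).map
            (addRightEmbedding fun t => if t = i then p.1 else 0),
          (∏ t ∈ Finset.cons i s hi, ((f t).factorial : ℝ))⁻¹ *
            ∏ t ∈ Finset.cons i s hi, risingFac (x t) (f t)
        = ((p.1.factorial : ℝ))⁻¹ * risingFac (x i) p.1 *
            (risingFac (∑ t ∈ s, x t) p.2 / p.2.factorial) := by
      intro p hp
      rw [Finset.sum_map]
      have step : ∀ g ∈ Finset.piAntidiag s p.2,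
          (∏ t ∈ Finset.cons i s hi,
              (((addRightEmbedding fun t => if t = i then p.1 else 0) g t).factorial : ℝ))⁻¹ *
            ∏ t ∈ Finset.cons i s hi,
              risingFac (x t) ((addRightEmbedding fun t => if t = i then p.1 else 0) g t)
          = ((p.1.factorial : ℝ))⁻¹ * risingFac (x i) p.1 *
              ((∏ t ∈ s, ((g t).factorial : ℝ))⁻¹ * ∏ t ∈ s, risingFac (x t) (g t)) := by
        intro g hg
        rw [Finset.mem_piAntidiag] at hg
        have hgi : g i = 0 := by
          by_contra h
          exact hi (hg.2 i h)
        have hval : ∀ t, (addRightEmbedding fun t => if t = i then p.1 else 0) g t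
            = if t = i then p.1 else g t := by
          intro t
          simp only [addRightEmbedding_apply, Pi.add_apply]
          by_cases ht : t = i
          · simp [ht, hgi]
          · simp [ht]
        simp only [hval]
        rw [Finset.prod_cons, Finset.prod_cons]
        rw [if_pos rfl]
        have e1 : ∏ t ∈ s, ((if t = i then p.1 else g t).factorial : ℝ)
            = ∏ t ∈ s, ((g t).factorial : ℝ) := by
          refine Finset.prod_congr rfl fun t ht => ?_
          rw [if_neg (by rintro rfl; exact hi ht)]
        have e2 : ∏ t ∈ s, risingFac (x t) (if t = i then p.1 else g t)
            = ∏ t ∈ s, risingFac (x t) (g t) := by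
          refine Finset.prod_congr rfl fun t ht => ?_
          rw [if_neg (by rintro rfl; exact hi ht)]
        rw [e1, e2, mul_inv]
        ring
      rw [Finset.sum_congr rfl step, ← Finset.mul_sum, ih]
    rw [Finset.sum_congr rfl key]
    rw [Finset.Nat.sum_antidiagonal_eq_sum_range_succ_mk]
    have final : ∑ k ∈ Finset.range (r+1),
        ((k.factorial : ℝ))⁻¹ * risingFac (x i) k *
          (risingFac (∑ t ∈ s, x t) (r - k) / (r - k).factorial)
        = (∑ k ∈ Finset.range (r+1),
            (r.choose k : ℝ) * risingFac (x i) k * risingFac (∑ t ∈ s, x t) (r - k)) / r.factorial := by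
      rw [Finset.sum_div]
      refine Finset.sum_congr rfl fun k hk => ?_
      have hk' : k ≤ r := by simpa [Nat.lt_succ_iff] using hk
      have hch : (r.choose k : ℝ) * k.factorial * (r - k).factorial = r.factorial := by
        exact_mod_cast congrArg (Nat.cast (R := ℝ)) (Nat.choose_mul_factorial_mul_factorial hk')
      have h1 : (k.factorial : ℝ) ≠ 0 := Nat.cast_ne_zero.mpr k.factorial_ne_zero
      have h2 : ((r - k).factorial : ℝ) ≠ 0 := Nat.cast_ne_zero.mpr (r-k).factorial_ne_zero
      have h3 : (r.factorial : ℝ) ≠ 0 := Nat.cast_ne_zero.mpr r.factorial_ne_zero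
      field_simp
      linear_combination (-risingFac (x i) k * risingFac (∑ t ∈ s, x t) (r - k)) * hch
    rw [final, vandermonde_rising, Finset.sum_cons]
lemma genStirling_eq_zero (α : ℝ) {s k : ℕ} (h : s < k) : genStirling α s k = 0 := by
  have hc : compositions s k = ∅ := by
    rw [Finset.eq_empty_iff_forall_notMem]
    intro f hf
    simp only [compositions, Finset.mem_filter] at hf
    obtain ⟨-, hpos, hsum⟩ := hf
    have hk : k ≤ ∑ i, f i := by
      calc k = ∑ _i : Fin k, 1 := by simp
        _ ≤ _ := Finset.sum_le_sum fun i _ => hpos i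
    omega
  simp [genStirling, hc]

lemma genStirlingNC_eq_range (α γ : ℝ) (N k : ℕ) :
    genStirlingNC α γ N k
      = ∑ s ∈ Finset.range (N+1),
          (N.choose s : ℝ) * genStirling α s k * risingFac (-γ) (N - s) := by
  rw [genStirlingNC]
  refine Finset.sum_subset ?_ ?_
  · intro s hs
    rw [Finset.mem_Icc] at hs
    rw [Finset.mem_range]
    omega
  · intro s hs hns
    rw [Finset.mem_range] at hs
    rw [Finset.mem_Icc] at hns
    have : s < k := by omega
    rw [genStirling_eq_zero α this]
    ring

lemma fact3 (m a b : ℕ) (h : a + b ≤ m) :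
    (m.factorial : ℝ) / ((a.factorial : ℝ) * (((m - a - b).factorial : ℝ))) * ((b.factorial : ℝ))⁻¹
      = (m.choose a : ℝ) * ((m - a).choose b : ℝ) := by
  have h1 : (m.choose a : ℝ) * a.factorial * (m - a).factorial = m.factorial := by
    exact_mod_cast congrArg (Nat.cast (R := ℝ)) (Nat.choose_mul_factorial_mul_factorial (by omega : a ≤ m))
  have h2 : ((m - a).choose b : ℝ) * b.factorial * (m - a - b).factorial = (m - a).factorial := by
    have := Nat.choose_mul_factorial_mul_factorial (by omega : b ≤ m - a)
    have e : m - a - b = (m - a) - b := by omega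
    rw [e]
    exact_mod_cast congrArg (Nat.cast (R := ℝ)) this
  have n1 : (a.factorial : ℝ) ≠ 0 := Nat.cast_ne_zero.mpr a.factorial_ne_zero
  have n2 : (b.factorial : ℝ) ≠ 0 := Nat.cast_ne_zero.mpr b.factorial_ne_zero
  have n3 : ((m - a - b).factorial : ℝ) ≠ 0 := Nat.cast_ne_zero.mpr (m-a-b).factorial_ne_zero
  field_simp
  linear_combination -h1 - (m.choose a : ℝ) * (a.factorial : ℝ) * h2

lemma oldJoint_inner_sum (α : ℝ) (V : ℕ → ℕ → ℝ) (n j m : ℕ) (nv : Fin j → ℕ) (i : Fin j) (a : ℕ)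
    (ha : a ≤ m) :
    ∑ mv ∈ ((Fintype.piFinset fun _ : Fin j => Finset.range (m + 1)).filter
          (fun mv => ∑ t, mv t ≤ m)).filter (fun mv => mv i = a),
        oldJoint α V n j m nv mv (m - ∑ t, mv t)
      = (m.choose a : ℝ) * risingFac ((nv i : ℝ) - α) a *
          ∑ k ∈ Finset.range (m - a + 1),
            (V (n + m) (j + k) / V n j) *
              genStirlingNC α (-(∑ t ∈ Finset.univ.erase i, ((nv t : ℝ) - α))) (m - a) k := by
  classical
  set X : ℝ := ∑ t ∈ Finset.univ.erase i, ((nv t : ℝ) - α) with hX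
  have hupdate_sum : ∀ (g : Fin j → ℕ), (∀ t, g t ≠ 0 → t ∈ Finset.univ.erase i) →
      ∑ t, Function.update g i a t = a + ∑ t ∈ Finset.univ.erase i, g t := by
    intro g hg
    rw [← Finset.add_sum_erase Finset.univ _ (Finset.mem_univ i)]
    congr 1
    · simp
    · refine Finset.sum_congr rfl fun t ht => ?_
      rw [Function.update_of_ne (Finset.ne_of_mem_erase ht)]
  have reindex :
      ∑ mv ∈ ((Fintype.piFinset fun _ : Fin j => Finset.range (m + 1)).filter
          (fun mv => ∑ t, mv t ≤ m)).filter (fun mv => mv i = a),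
        oldJoint α V n j m nv mv (m - ∑ t, mv t)
      = ∑ p ∈ (Finset.range (m - a + 1)).sigma
            (fun b => Finset.piAntidiag ((Finset.univ : Finset (Fin j)).erase i) b),
          oldJoint α V n j m nv (Function.update p.2 i a)
            (m - ∑ t, Function.update p.2 i a t) := by
    refine Finset.sum_nbij'
      (i := fun mv => (⟨∑ t ∈ Finset.univ.erase i, mv t, Function.update mv i 0⟩ :
        (_ : ℕ) × (Fin j → ℕ)))
      (j := fun p => Function.update p.2 i a) ?_ ?_ ?_ ?_ ?_
    · intro mv hmv
      simp only [Finset.mem_filter, Fintype.mem_piFinset, Finset.mem_range] at hmv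
      obtain ⟨⟨hcoord, hsum⟩, hia⟩ := hmv
      have hsplit : ∑ t, mv t = a + ∑ t ∈ Finset.univ.erase i, mv t := by
        rw [← Finset.add_sum_erase Finset.univ _ (Finset.mem_univ i), hia]
      simp only [Finset.mem_sigma, Finset.mem_range, Finset.mem_piAntidiag]
      refine ⟨by omega, ?_, ?_⟩
      · refine Finset.sum_congr rfl fun t ht => ?_
        rw [Function.update_of_ne (Finset.ne_of_mem_erase ht)]
      · intro t ht
        rcases eq_or_ne t i with rfl | hti
        · simp at ht
        · exact Finset.mem_erase.mpr ⟨hti, Finset.mem_univ t⟩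
    · intro p hp
      simp only [Finset.mem_sigma, Finset.mem_range, Finset.mem_piAntidiag] at hp
      obtain ⟨hb, hgsum, hgsupp⟩ := hp
      have hgi : p.2 i = 0 := by
        by_contra h
        exact absurd (hgsupp i h) (by simp)
      have hsum' : ∑ t, Function.update p.2 i a t = a + p.1 := by
        rw [hupdate_sum p.2 hgsupp, hgsum]
      simp only [Finset.mem_filter, Fintype.mem_piFinset, Finset.mem_range]
      refine ⟨⟨?_, by omega⟩, by simp⟩
      intro t
      rcases eq_or_ne t i with rfl | hti
      · simp; omega
      · rw [Function.update_of_ne hti]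
        have hle : p.2 t ≤ p.1 := by
          rcases eq_or_ne (p.2 t) 0 with h0 | h0
          · simp [h0]
          · exact hgsum ▸ Finset.single_le_sum (fun _ _ => Nat.zero_le _) (hgsupp t h0)
        omega
    · intro mv hmv
      simp only [Finset.mem_filter] at hmv
      funext t
      rcases eq_or_ne t i with rfl | hti
      · simp [hmv.2]
      · simp [Function.update_of_ne hti]
    · intro p hp
      simp only [Finset.mem_sigma, Finset.mem_range, Finset.mem_piAntidiag] at hp
      obtain ⟨hb, hgsum, hgsupp⟩ := hp
      have hgi : p.2 i = 0 := by
        by_contra h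
        exact absurd (hgsupp i h) (by simp)
      refine Sigma.ext ?_ (heq_of_eq ?_)
      · simp only
        rw [← hgsum]
        refine Finset.sum_congr rfl fun t ht => ?_
        rw [Function.update_of_ne (Finset.ne_of_mem_erase ht)]
      · funext t
        rcases eq_or_ne t i with rfl | hti
        · simp [hgi]
        · simp [Function.update_of_ne hti]
    · intro mv hmv
      simp only [Finset.mem_filter] at hmv
      have : Function.update (Function.update mv i 0) i a = mv := by
        funext t
        rcases eq_or_ne t i with rfl | hti
        · simp [hmv.2]
        · simp [Function.update_of_ne hti]
      rw [this]
  rw [reindex, Finset.sum_sigma]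
  have perb : ∀ b ∈ Finset.range (m - a + 1),
      ∑ g ∈ Finset.piAntidiag ((Finset.univ : Finset (Fin j)).erase i) b,
          oldJoint α V n j m nv (Function.update g i a) (m - ∑ t, Function.update g i a t)
        = (m.choose a : ℝ) * (((m - a).choose b : ℝ) * risingFac ((nv i : ℝ) - α) a *
            risingFac X b *
            ∑ k ∈ Finset.range (m - a - b + 1),
              (V (n + m) (j + k) / V n j) * genStirling α (m - a - b) k) := by
    intro b hb
    rw [Finset.mem_range] at hb
    have hab : a + b ≤ m := by omega
    set s0 := m - a - b with hs0
    set T : ℝ := ∑ k ∈ Finset.range (s0 + 1), (V (n + m) (j + k) / V n j) * genStirling α s0 k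
      with hT
    have hms : m - (a + b) = s0 := by omega
    have perg : ∀ g ∈ Finset.piAntidiag ((Finset.univ : Finset (Fin j)).erase i) b,
        oldJoint α V n j m nv (Function.update g i a) (m - ∑ t, Function.update g i a t)
          = ((m.factorial : ℝ) / ((a.factorial : ℝ) * (s0.factorial : ℝ)) *
              risingFac ((nv i : ℝ) - α) a * T) *
            ((∏ t ∈ Finset.univ.erase i, ((g t).factorial : ℝ))⁻¹ *
              ∏ t ∈ Finset.univ.erase i, risingFac ((nv t : ℝ) - α) (g t)) := by
      intro g hg
      rw [Finset.mem_piAntidiag] at hg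
      have hsum : ∑ t, Function.update g i a t = a + b := by
        rw [hupdate_sum g hg.2, hg.1]
      rw [oldJoint, hsum, hms]
      have hprod1 : ∏ t, ((Function.update g i a t).factorial : ℝ)
          = (a.factorial : ℝ) * ∏ t ∈ Finset.univ.erase i, ((g t).factorial : ℝ) := by
        rw [← Finset.mul_prod_erase Finset.univ _ (Finset.mem_univ i)]
        congr 1
        · simp
        · exact Finset.prod_congr rfl fun t ht => by
            rw [Function.update_of_ne (Finset.ne_of_mem_erase ht)]
      have hprod2 : ∏ t, risingFac ((nv t : ℝ) - α) (Function.update g i a t)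
          = risingFac ((nv i : ℝ) - α) a *
              ∏ t ∈ Finset.univ.erase i, risingFac ((nv t : ℝ) - α) (g t) := by
        rw [← Finset.mul_prod_erase Finset.univ _ (Finset.mem_univ i)]
        congr 1
        · simp
        · exact Finset.prod_congr rfl fun t ht => by
            rw [Function.update_of_ne (Finset.ne_of_mem_erase ht)]
      rw [hprod1, hprod2, ← hT]
      field_simp
    rw [Finset.sum_congr rfl perg, ← Finset.mul_sum]
    rw [vandermonde_multi (Finset.univ.erase i) (fun t => (nv t : ℝ) - α) b, ← hX]
    have key := fact3 m a b hab
    rw [← hs0] at key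
    linear_combination (risingFac ((nv i : ℝ) - α) a * risingFac X b * T) * key
  rw [Finset.sum_congr rfl perb, ← Finset.mul_sum]
  set F : ℕ → ℝ := fun s => ((m - a).choose s : ℝ) * risingFac X (m - a - s) *
      ∑ k ∈ Finset.range (s + 1), (V (n + m) (j + k) / V n j) * genStirling α s k with hF
  have refl := Finset.sum_range_reflect F (m - a + 1)
  simp only [show ∀ b, m - a + 1 - 1 - b = m - a - b from fun b => by omega] at refl
  have step1 : ∀ b ∈ Finset.range (m - a + 1),
      ((m - a).choose b : ℝ) * risingFac ((nv i : ℝ) - α) a * risingFac X b *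
          ∑ k ∈ Finset.range (m - a - b + 1),
            (V (n + m) (j + k) / V n j) * genStirling α (m - a - b) k
        = risingFac ((nv i : ℝ) - α) a * F (m - a - b) := by
    intro b hb
    rw [Finset.mem_range] at hb
    have hb' : b ≤ m - a := by omega
    rw [hF]
    simp only
    have h1 : (m - a).choose (m - a - b) = (m - a).choose b := Nat.choose_symm hb'
    have h2 : m - a - (m - a - b) = b := by omega
    rw [h1, h2]
    ring
  rw [Finset.sum_congr rfl step1, ← Finset.mul_sum, refl]
  have extend : ∀ s ∈ Finset.range (m - a + 1), F s
      = ∑ k ∈ Finset.range (m - a + 1), ((m - a).choose s : ℝ) * risingFac X (m - a - s) *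
          ((V (n + m) (j + k) / V n j) * genStirling α s k) := by
    intro s hs
    rw [Finset.mem_range] at hs
    rw [hF]
    simp only
    have hsub : ∑ k ∈ Finset.range (s + 1), (V (n + m) (j + k) / V n j) * genStirling α s k
        = ∑ k ∈ Finset.range (m - a + 1), (V (n + m) (j + k) / V n j) * genStirling α s k := by
      refine Finset.sum_subset (Finset.range_subset_range.mpr (by omega)) ?_
      intro k hk hks
      rw [Finset.mem_range] at hk hks
      rw [genStirling_eq_zero α (by omega : s < k), mul_zero]
    rw [hsub, Finset.mul_sum]
  have hsumF : ∑ s ∈ Finset.range (m - a + 1), F s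
      = ∑ k ∈ Finset.range (m - a + 1),
          (V (n + m) (j + k) / V n j) * genStirlingNC α (-X) (m - a) k := by
    rw [Finset.sum_congr rfl extend, Finset.sum_comm]
    refine Finset.sum_congr rfl fun k _ => ?_
    rw [genStirlingNC_eq_range, Finset.mul_sum]
    refine Finset.sum_congr rfl fun s _ => ?_
    rw [neg_neg]
    ring
  rw [hsumF]
  ring

/-- Expected number of old blocks of size `l` after allocating the additional
`m`-sample. -/
theorem oldJoint_expected_size_l (n j m : ℕ) (hn : 1 ≤ n) (hj : 1 ≤ j)
    (hm : 1 ≤ m) (hjn : j ≤ n)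
    (nv : Fin j → ℕ) (hnv : ∀ i, 0 < nv i) (hsum : ∑ i, nv i = n)
    (α : ℝ) (hα : α < 1) (V : ℕ → ℕ → ℝ) (hV : V n j ≠ 0)
    (l : ℕ) (hl : 1 ≤ l) (hln : l ≤ n + m) :
    ∑ mv ∈ (Fintype.piFinset fun _ : Fin j => Finset.range (m + 1)).filter
        (fun mv => ∑ i, mv i ≤ m),
        (((Finset.univ.filter fun i => nv i + mv i = l).card : ℕ) : ℝ) *
          oldJoint α V n j m nv mv (m - ∑ i, mv i) =
      ∑ i ∈ Finset.univ.filter (fun i => nv i ≤ l ∧ l ≤ nv i + m),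
        (m.choose (l - nv i) : ℝ) * risingFac ((nv i : ℝ) - α) (l - nv i) *
          ∑ k ∈ Finset.range (m + nv i - l + 1),
            (V (n + m) (j + k) / V n j) *
              genStirlingNC α (-((n : ℝ) - j * α + α - nv i)) (m + nv i - l) k := by
  classical
  have lhs1 : ∀ mv ∈ (Fintype.piFinset fun _ : Fin j => Finset.range (m + 1)).filter
      (fun mv => ∑ i, mv i ≤ m),
      (((Finset.univ.filter fun i => nv i + mv i = l).card : ℕ) : ℝ) *
        oldJoint α V n j m nv mv (m - ∑ i, mv i)
      = ∑ i : Fin j, if nv i + mv i = l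
          then oldJoint α V n j m nv mv (m - ∑ t, mv t) else 0 := by
    intro mv _
    rw [Finset.card_filter, Nat.cast_sum, Finset.sum_mul]
    refine Finset.sum_congr rfl fun i _ => ?_
    by_cases hc : nv i + mv i = l <;> simp [hc]
  rw [Finset.sum_congr rfl lhs1, Finset.sum_comm, Finset.sum_filter]
  refine Finset.sum_congr rfl fun i _ => ?_
  by_cases hP : nv i ≤ l ∧ l ≤ nv i + m
  · rw [if_pos hP]
    obtain ⟨h1, h2⟩ := hP
    have hnin : nv i ≤ n :=
      hsum ▸ Finset.single_le_sum (fun _ _ => Nat.zero_le _) (Finset.mem_univ i)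
    set a := l - nv i with haa
    have ha : a ≤ m := by omega
    have conv1 : (∑ mv ∈ ((Fintype.piFinset fun _ : Fin j => Finset.range (m + 1)).filter
            (fun mv => ∑ t, mv t ≤ m)).filter (fun mv => mv i = a),
          oldJoint α V n j m nv mv (m - ∑ t, mv t))
        = ∑ mv ∈ (Fintype.piFinset fun _ : Fin j => Finset.range (m + 1)).filter
          (fun mv => ∑ t, mv t ≤ m),
          if nv i + mv i = l then oldJoint α V n j m nv mv (m - ∑ t, mv t) else 0 := by
      rw [Finset.sum_filter]
      refine Finset.sum_congr rfl fun mv _ => ?_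
      by_cases h : mv i = a
      · rw [if_pos h, if_pos (by omega)]
      · rw [if_neg h, if_neg (by omega)]
    rw [← conv1, oldJoint_inner_sum α V n j m nv i a ha]
    have hma : m + nv i - l = m - a := by omega
    rw [hma]
    have hXγ : ∑ t ∈ Finset.univ.erase i, ((nv t : ℝ) - α)
        = (n : ℝ) - j * α + α - nv i := by
      have e1 : ∑ t ∈ Finset.univ.erase i, ((nv t : ℝ) - α)
          = ((∑ t ∈ Finset.univ.erase i, nv t : ℕ) : ℝ) -
              ((Finset.univ.erase i).card : ℝ) * α := by
        rw [Finset.sum_sub_distrib, Finset.sum_const, nsmul_eq_mul, Nat.cast_sum]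
      have e2 : ∑ t ∈ Finset.univ.erase i, nv t = n - nv i := by
        have h := Finset.add_sum_erase Finset.univ nv (Finset.mem_univ i)
        omega
      have e3 : (Finset.univ.erase i).card = j - 1 := by
        rw [Finset.card_erase_of_mem (Finset.mem_univ i), Finset.card_univ, Fintype.card_fin]
      rw [e1, e2, e3, Nat.cast_sub hnin, Nat.cast_sub hj, Nat.cast_one]
      ring
    rw [hXγ]
  · rw [if_neg hP]
    push_neg at hP
    refine Finset.sum_eq_zero fun mv hmv => ?_
    rw [if_neg]
    simp only [Finset.mem_filter, Fintype.mem_piFinset, Finset.mem_range] at hmv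
    have hle : mv i ≤ ∑ t, mv t :=
      Finset.single_le_sum (fun _ _ => Nat.zero_le _) (Finset.mem_univ i)
    omega
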